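/- arXiv:1401.2863 — 11 statements merged into one kernel-verified Lean document; each statement's English description precedes it below -/
import Mathlib

section
/- If S is a finite subset of a group G containing the identity and |S| = |S^2|, then S is a subgroup of G. -/
open Pointwise

theorem stmt0 {G : Type*} [Group G] (S : Set G) (hfin : S.Finite) (h1 : (1 : G) ∈ S)
    (hcard : (S * S).ncard = S.ncard) :
    ∃ H : Subgroup G, (H : Set G) = S := by
  have hSS : S * S = S := by
    have hsub : S ⊆ S * S := fun s hs => ⟨s, hs, 1, h1, mul_one s⟩
    exact (Set.eq_of_subset_of_ncard_le hsub hcard.le (hfin.mul hfin)).symm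
  have hsmul : ∀ a ∈ S, a • S = S := by
    intro a ha
    refine Set.eq_of_subset_of_ncard_le ?_ ?_ hfin
    · rintro x ⟨s, hs, rfl⟩
      rw [← hSS]; exact Set.mul_mem_mul ha hs
    · rw [Set.ncard_smul_set]
  have hinv : ∀ a ∈ S, a⁻¹ ∈ S := ?_
  · exact ⟨{ carrier := S
             mul_mem' := fun ha hb => hSS ▸ Set.mul_mem_mul ha hb
             one_mem' := h1
             inv_mem' := fun {a} ha => hinv a ha }, rfl⟩
  intro a ha
  have : (1 : G) ∈ a • S := by rw [hsmul a ha]; exact h1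
  obtain ⟨s, hs, hss⟩ := this
  simp only [smul_eq_mul] at hss
  have : a⁻¹ = s := inv_eq_of_mul_eq_one_right hss
  simpa [this] using hs
end

section
/- Let H be a subgroup of a group G, x ∈ G, and suppose HxH = Hx⁻¹H. Then there exists y ∈ Hx with y² ∈ H such that HyH = HxH, y⁻¹Hy = x⁻¹Hx, and ⟨H, y⟩ = ⟨H, x⟩. -/
open Pointwise

private lemma coe_mul_singleton_of_mem {G : Type*} [Group G] (H : Subgroup G) {a : G}
    (ha : a ∈ H) : (H : Set G) * {a} = (H : Set G) := by
  ext g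
  constructor
  · rintro ⟨h, hh, a', rfl, rfl⟩
    exact mul_mem hh ha
  · intro hg
    exact ⟨g * a⁻¹, mul_mem hg (inv_mem ha), a, rfl, by group⟩

theorem stmt5 {G : Type*} [Group G] (H : Subgroup G) (x : G)
    (h : (H : Set G) * {x} * (H : Set G) = (H : Set G) * {x⁻¹} * (H : Set G)) :
    ∃ y ∈ (H : Set G) * {x}, y ^ 2 ∈ H ∧
      (H : Set G) * {y} * (H : Set G) = (H : Set G) * {x} * (H : Set G) ∧
      (fun g => y⁻¹ * g * y) '' (H : Set G) = (fun g => x⁻¹ * g * x) '' (H : Set G) ∧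
      H ⊔ Subgroup.zpowers y = H ⊔ Subgroup.zpowers x := by
  have hxinv : x⁻¹ ∈ (H : Set G) * {x} * (H : Set G) := by
    rw [h]
    have : (1 : G) * x⁻¹ * 1 ∈ (H : Set G) * {x⁻¹} * (H : Set G) :=
      Set.mul_mem_mul (Set.mul_mem_mul H.one_mem rfl) H.one_mem
    simpa using this
  obtain ⟨u, ⟨a, ha, x', hx', rfl⟩, b, hb, heq⟩ := hxinv
  rw [Set.mem_singleton_iff] at hx'
  subst x'
  -- heq : a * x * b = x⁻¹
  refine ⟨a * x, ⟨a, ha, x, rfl, rfl⟩, ?_, ?_, ?_, ?_⟩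
  · have : (a * x) ^ 2 = a * b⁻¹ := by
      have hax : a * x = x⁻¹ * b⁻¹ := by
        rw [← heq]; group
      calc (a * x) ^ 2 = (a * x) * (a * x) := sq _
        _ = (a * x) * (x⁻¹ * b⁻¹) := by rw [← hax]
        _ = a * b⁻¹ := by group
    rw [this]
    exact mul_mem ha (inv_mem hb)
  · have : ({a * x} : Set G) = {a} * {x} := by simp [Set.singleton_mul_singleton]
    rw [this, ← mul_assoc, coe_mul_singleton_of_mem H ha]
  · ext z
    simp only [Set.mem_image]
    constructor
    · rintro ⟨g, hg, rfl⟩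
      exact ⟨a⁻¹ * g * a, mul_mem (mul_mem (inv_mem ha) hg) ha, by group⟩
    · rintro ⟨g, hg, rfl⟩
      exact ⟨a * g * a⁻¹, mul_mem (mul_mem ha hg) (inv_mem ha), by group⟩
  · apply le_antisymm <;> refine sup_le le_sup_left (Subgroup.zpowers_le.mpr ?_)
    · exact mul_mem (Subgroup.mem_sup_left ha)
        (Subgroup.mem_sup_right (Subgroup.mem_zpowers x))
    · have h2 : a⁻¹ * (a * x) ∈ H ⊔ Subgroup.zpowers (a * x) :=
        mul_mem (Subgroup.mem_sup_left (inv_mem ha))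
          (Subgroup.mem_sup_right (Subgroup.mem_zpowers _))
      simpa using h2
end

section
/- Let H be a proper subgroup of a finite group K, let x ∈ K with x² ∈ H, and set S = H ∪ {x, x⁻¹}. Then S³ = H ∪ HxH ∪ x⁻¹Hx. -/
open Pointwise

theorem stmt6 {K : Type*} [Group K] [Finite K] (H : Subgroup K) (hH : H ≠ ⊤)
    (x : K) (hx : x ∉ H) (hx2 : x ^ 2 ∈ H) :
    ((H : Set K) ∪ {x, x⁻¹}) * ((H : Set K) ∪ {x, x⁻¹}) * ((H : Set K) ∪ {x, x⁻¹}) =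
      (H : Set K) ∪ (H : Set K) * {x} * (H : Set K) ∪
        (fun g => x⁻¹ * g * x) '' (H : Set K) := by
  have hxx : x * x ∈ H := by rwa [pow_two] at hx2
  have hinv2 : x⁻¹ * x⁻¹ ∈ H := by
    have := H.inv_mem hxx; rwa [mul_inv_rev] at this
  -- products of two elements of {x, x⁻¹} lie in H
  have hT2 : ∀ a ∈ ({x, x⁻¹} : Set K), ∀ b ∈ ({x, x⁻¹} : Set K), a * b ∈ H := by
    rintro _ (rfl | rfl) b (rfl | rfl)
    · exact hxx
    · simpa using H.one_mem
    · simpa using H.one_mem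
    · exact hinv2
  have hTx : ∀ a ∈ ({x, x⁻¹} : Set K), x * a ∈ H := by
    rintro _ (rfl | rfl)
    · exact hxx
    · simpa using H.one_mem
  have hxT : ∀ a ∈ ({x, x⁻¹} : Set K), a * x⁻¹ ∈ H := by
    rintro _ (rfl | rfl)
    · simpa using H.one_mem
    · exact hinv2
  have hmemL : ∀ a ∈ ({x, x⁻¹} : Set K), ∃ h ∈ H, a = h * x := by
    rintro a (h | h)
    · exact ⟨1, H.one_mem, by rw [h, one_mul]⟩
    · exact ⟨x⁻¹ * x⁻¹, hinv2, by rw [h]; group⟩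
  have hmemR : ∀ a ∈ ({x, x⁻¹} : Set K), ∃ h ∈ H, a = x * h := by
    rintro a (h | h)
    · exact ⟨1, H.one_mem, by rw [h, mul_one]⟩
    · exact ⟨x⁻¹ * x⁻¹, hinv2, by rw [h]; group⟩
  apply Set.Subset.antisymm
  · rintro g ⟨ab, ⟨a, ha, b, hb, rfl⟩, c, hc, rfl⟩
    show a * b * c ∈ _
    rcases ha with ha | ha
    · rcases hb with hb | hb
      · rcases hc with hc | hc
        · -- H H H
          exact Or.inl (Or.inl (mul_mem (mul_mem ha hb) hc))
        · -- H H T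
          obtain ⟨h, hh, rfl⟩ := hmemL c hc
          refine Or.inl (Or.inr ?_)
          have : a * b * (h * x) = a * b * h * x * 1 := by group
          rw [this]
          exact Set.mul_mem_mul (Set.mul_mem_mul (mul_mem (mul_mem ha hb) hh) rfl)
            H.one_mem
      · rcases hc with hc | hc
        · -- H T H
          obtain ⟨h, hh, rfl⟩ := hmemL b hb
          refine Or.inl (Or.inr ?_)
          have : a * (h * x) * c = a * h * x * c := by group
          rw [this]
          exact Set.mul_mem_mul (Set.mul_mem_mul (mul_mem ha hh) rfl) hc
        · -- H T T
          exact Or.inl (Or.inl (by rw [mul_assoc]; exact mul_mem ha (hT2 b hb c hc)))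
    · rcases hb with hb | hb
      · rcases hc with hc | hc
        · -- T H H
          obtain ⟨h, hh, rfl⟩ := hmemR a ha
          refine Or.inl (Or.inr ?_)
          have : x * h * b * c = 1 * x * (h * b * c) := by group
          rw [this]
          exact Set.mul_mem_mul (Set.mul_mem_mul H.one_mem rfl)
            (mul_mem (mul_mem hh hb) hc)
        · -- T H T : lands in x⁻¹ H x
          refine Or.inr ⟨x * a * b * (c * x⁻¹), ?_, ?_⟩
          · exact mul_mem (mul_mem (hTx a ha) hb) (hxT c hc)
          · group
      · -- T T _
        rcases hc with hc | hc
        · -- T T H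
          exact Or.inl (Or.inl (mul_mem (hT2 a ha b hb) hc))
        · -- T T T
          obtain ⟨h, hh, rfl⟩ := hmemL c hc
          refine Or.inl (Or.inr ?_)
          have : a * b * (h * x) = (a * b * h) * x * 1 := by group
          rw [this]
          exact Set.mul_mem_mul (Set.mul_mem_mul (mul_mem (hT2 a ha b hb) hh) rfl)
            H.one_mem
  · rintro g ((hg | hg) | ⟨h, hh, rfl⟩)
    · have : g = g * 1 * 1 := by group
      rw [this]
      exact Set.mul_mem_mul (Set.mul_mem_mul (Or.inl hg) (Or.inl H.one_mem))
        (Or.inl H.one_mem)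
    · obtain ⟨gx, ⟨h₁, hh₁, xx, hxx', rfl⟩, h₂, hh₂, rfl⟩ := hg
      rcases hxx' with rfl
      exact Set.mul_mem_mul (Set.mul_mem_mul (Or.inl hh₁) (Or.inr (Or.inl rfl)))
        (Or.inl hh₂)
    · exact Set.mul_mem_mul (Set.mul_mem_mul (Or.inr (Or.inr rfl)) (Or.inl hh))
        (Or.inr (Or.inl rfl))
end

section
/- Let H be a proper subgroup of a finite group K, x ∈ K with x² ∈ H, let L = H ∩ x⁻¹Hx, S = H ∪ {x, x⁻¹}, and T = H ∪ xL. Then x⁻¹Lx = L and T³ = S³. -/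
open Pointwise

theorem stmt7 {K : Type*} [Group K] [Finite K] (H : Subgroup K) (hH : H ≠ ⊤)
    (x : K) (hx : x ∉ H) (hx2 : x ^ 2 ∈ H)
    (L : Set K) (hL : L = (H : Set K) ∩ (fun g => x⁻¹ * g * x) '' (H : Set K))
    (S T : Set K) (hS : S = (H : Set K) ∪ {x, x⁻¹}) (hT : T = (H : Set K) ∪ {x} * L) :
    (fun g => x⁻¹ * g * x) '' L = L ∧ T * T * T = S * S * S := by
  have hLmem : ∀ l : K, l ∈ L ↔ l ∈ H ∧ x * l * x⁻¹ ∈ H := by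
    intro l
    constructor
    · intro hl
      rw [hL] at hl
      obtain ⟨hlH, h, hh, heq⟩ := hl
      refine ⟨hlH, ?_⟩
      have : x * l * x⁻¹ = h := by rw [← heq]; group
      rw [this]; exact hh
    · rintro ⟨h1, h2⟩
      rw [hL]
      exact ⟨h1, ⟨x * l * x⁻¹, h2, by group⟩⟩
  have hxinv2 : (x ^ 2)⁻¹ ∈ H := inv_mem hx2
  constructor
  · ext a
    simp only [Set.mem_image]
    constructor
    · rintro ⟨l, hl, rfl⟩
      rw [hLmem] at hl ⊢
      obtain ⟨h1, h2⟩ := hl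
      constructor
      · have e : x⁻¹ * l * x = (x ^ 2)⁻¹ * (x * l * x⁻¹) * x ^ 2 := by group
        rw [e]; exact mul_mem (mul_mem hxinv2 h2) hx2
      · have e : x * (x⁻¹ * l * x) * x⁻¹ = l := by group
        rw [e]; exact h1
    · intro ha
      rw [hLmem] at ha
      obtain ⟨h1, h2⟩ := ha
      refine ⟨x * a * x⁻¹, ?_, by group⟩
      rw [hLmem]
      refine ⟨h2, ?_⟩
      have hxx : x * x ∈ H := by rw [← pow_two]; exact hx2
      have e : x * (x * a * x⁻¹) * x⁻¹ = (x * x) * a * (x * x)⁻¹ := by group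
      rw [e]; exact mul_mem (mul_mem hxx h1) (inv_mem hxx)
  · have hTmem : ∀ t : K, t ∈ T ↔ t ∈ H ∨ ∃ l, l ∈ H ∧ x * l * x⁻¹ ∈ H ∧ t = x * l := by
      intro t
      rw [hT, Set.mem_union, Set.singleton_mul, Set.mem_image]
      constructor
      · rintro (h | ⟨l, hl, rfl⟩)
        · exact Or.inl h
        · rw [hLmem] at hl; exact Or.inr ⟨l, hl.1, hl.2, rfl⟩
      · rintro (h | ⟨l, h1, h2, rfl⟩)
        · exact Or.inl h
        · exact Or.inr ⟨l, (hLmem l).mpr ⟨h1, h2⟩, rfl⟩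
    have hSH : ∀ s : K, s ∈ H → s ∈ S := by
      intro s h; rw [hS]; exact Or.inl h
    have hSx : x ∈ S := by rw [hS]; exact Or.inr (Or.inl rfl)
    have h1S : (1 : K) ∈ S := hSH 1 (one_mem H)
    have prodS : ∀ s1 s2 s3 : K, s1 ∈ S → s2 ∈ S → s3 ∈ S → s1 * s2 * s3 ∈ S * S * S :=
      fun s1 s2 s3 a b c => Set.mul_mem_mul (Set.mul_mem_mul a b) c
    apply Set.Subset.antisymm
    · rintro a ha
      rw [Set.mem_mul] at ha
      obtain ⟨b, hb, t3, ht3, rfl⟩ := ha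
      rw [Set.mem_mul] at hb
      obtain ⟨t1, ht1, t2, ht2, rfl⟩ := hb
      rw [hTmem] at ht1 ht2 ht3
      rcases ht1 with h1 | ⟨l1, hl1, hm1, rfl⟩ <;>
        rcases ht2 with h2 | ⟨l2, hl2, hm2, rfl⟩ <;>
          rcases ht3 with h3 | ⟨l3, hl3, hm3, rfl⟩
      · simpa using prodS (t1 * t2 * t3) 1 1
          (hSH _ (mul_mem (mul_mem h1 h2) h3)) h1S h1S
      · have e : t1 * t2 * (x * l3) = (t1 * t2) * x * l3 := by group
        rw [e]
        exact prodS _ _ _ (hSH _ (mul_mem h1 h2)) hSx (hSH _ hl3)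
      · have e : t1 * (x * l2) * t3 = (t1 * (x * l2 * x⁻¹)) * x * t3 := by group
        rw [e]
        exact prodS _ _ _ (hSH _ (mul_mem h1 hm2)) hSx (hSH _ h3)
      · have hmem : t1 * (x * l2) * (x * l3) ∈ H := by
          have e : t1 * (x * l2) * (x * l3) = t1 * (x * l2 * x⁻¹) * x ^ 2 * l3 := by group
          rw [e]
          exact mul_mem (mul_mem (mul_mem h1 hm2) hx2) hl3
        simpa using prodS _ 1 1 (hSH _ hmem) h1S h1S
      · have e : x * l1 * t2 * t3 = x * (l1 * t2 * t3) * 1 := by group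
        rw [e]
        exact prodS _ _ _ hSx (hSH _ (mul_mem (mul_mem hl1 h2) h3)) h1S
      · have e : x * l1 * t2 * (x * l3) = x * (l1 * t2 * (x * l3 * x⁻¹)) * x := by group
        rw [e]
        exact prodS _ _ _ hSx (hSH _ (mul_mem (mul_mem hl1 h2) hm3)) hSx
      · have hmem : x * l1 * (x * l2) * t3 ∈ H := by
          have e : x * l1 * (x * l2) * t3 = (x * l1 * x⁻¹) * x ^ 2 * l2 * t3 := by group
          rw [e]
          exact mul_mem (mul_mem (mul_mem hm1 hx2) hl2) h3
        simpa using prodS _ 1 1 (hSH _ hmem) h1S h1S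
      · have e : x * l1 * (x * l2) * (x * l3) =
            ((x * l1 * x⁻¹) * x ^ 2 * l2) * x * l3 := by group
        rw [e]
        exact prodS _ _ _ (hSH _ (mul_mem (mul_mem hm1 hx2) hl2)) hSx (hSH _ hl3)
    · have hST : S ⊆ T := by
        intro s hs
        rw [hS] at hs
        rw [hTmem]
        rcases hs with h | h | h
        · exact Or.inl h
        · refine Or.inr ⟨1, one_mem H, ?_, by rw [h, mul_one]⟩
          have e : x * 1 * x⁻¹ = (1 : K) := by group
          rw [e]; exact one_mem H
        · refine Or.inr ⟨(x ^ 2)⁻¹, hxinv2, ?_, ?_⟩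
          · have e : x * (x ^ 2)⁻¹ * x⁻¹ = (x ^ 2)⁻¹ := by group
            rw [e]; exact hxinv2
          · rw [h]; group
      exact Set.mul_subset_mul (Set.mul_subset_mul hST hST) hST
end

section
/- Let K be a finite group, H a non-normal subgroup, x ∈ K with ⟨H, x⟩ = K, x² ∈ H, and x of order greater than 2. Set S = H ∪ {x, x⁻¹}. If S³ ≠ K, then any symmetric subset T of K containing S with T³ = S³ satisfies T ⊆ H ∪ (Hx ∩ xH). -/
open Pointwise

private def InHxH {K : Type*} [Group K] (H : Subgroup K) (x g : K) : Prop :=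
  ∃ h1 h2 : K, h1 ∈ H ∧ h2 ∈ H ∧ g = h1 * x * h2

private def InxHx {K : Type*} [Group K] (H : Subgroup K) (x g : K) : Prop :=
  ∃ h : K, h ∈ H ∧ g = x * h * x

private lemma S_mem {K : Type*} [Group K] (H : Subgroup K) (x : K) (hx2 : x ^ 2 ∈ H)
    (S : Set K) (hS : S = (H : Set K) ∪ {x, x⁻¹}) :
    ∀ s ∈ S, s ∈ H ∨ ∃ h h' : K, h ∈ H ∧ h' ∈ H ∧ s = h * x ∧ s = x * h' := by
  intro s hs
  rw [hS] at hs
  rcases hs with hs | hs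
  · exact Or.inl hs
  · rcases hs with rfl | hs
    · exact Or.inr ⟨1, 1, H.one_mem, H.one_mem, by group, by group⟩
    · rcases hs with rfl
      exact Or.inr ⟨(x ^ 2)⁻¹, (x ^ 2)⁻¹, H.inv_mem hx2, H.inv_mem hx2, by group, by group⟩

private lemma triple_mem {K : Type*} [Group K] (H : Subgroup K) (x : K) (hx2 : x ^ 2 ∈ H)
    (a b c : K)
    (ha : a ∈ H ∨ ∃ h h' : K, h ∈ H ∧ h' ∈ H ∧ a = h * x ∧ a = x * h')
    (hb : b ∈ H ∨ ∃ h h' : K, h ∈ H ∧ h' ∈ H ∧ b = h * x ∧ b = x * h')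
    (hc : c ∈ H ∨ ∃ h h' : K, h ∈ H ∧ h' ∈ H ∧ c = h * x ∧ c = x * h') :
    a * b * c ∈ H ∨ InHxH H x (a * b * c) ∨ InxHx H x (a * b * c) := by
  have hxx : x * x ∈ H := by rwa [← pow_two]
  rcases ha with ha | ⟨a1, a2, ha1, ha2, hae1, hae2⟩
  · rcases hb with hb | ⟨b1, b2, hb1, hb2, hbe1, hbe2⟩
    · rcases hc with hc | ⟨c1, c2, hc1, hc2, hce1, hce2⟩
      · exact Or.inl (H.mul_mem (H.mul_mem ha hb) hc)
      · refine Or.inr (Or.inl ⟨a * b * c1, 1, H.mul_mem (H.mul_mem ha hb) hc1, H.one_mem, ?_⟩)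
        rw [hce1]; group
    · rcases hc with hc | ⟨c1, c2, hc1, hc2, hce1, hce2⟩
      · refine Or.inr (Or.inl ⟨a * b1, c, H.mul_mem ha hb1, hc, ?_⟩)
        rw [hbe1]; group
      · refine Or.inl ?_
        have h : a * b * c = a * (b1 * (x * x) * c2) := by rw [hbe1, hce2]; group
        rw [h]
        exact H.mul_mem ha (H.mul_mem (H.mul_mem hb1 hxx) hc2)
  · rcases hb with hb | ⟨b1, b2, hb1, hb2, hbe1, hbe2⟩
    · rcases hc with hc | ⟨c1, c2, hc1, hc2, hce1, hce2⟩
      · refine Or.inr (Or.inl ⟨a1, b * c, ha1, H.mul_mem hb hc, ?_⟩)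
        rw [hae1]; group
      · refine Or.inr (Or.inr ⟨a2 * b * c1, H.mul_mem (H.mul_mem ha2 hb) hc1, ?_⟩)
        rw [hae2, hce1]; group
    · rcases hc with hc | ⟨c1, c2, hc1, hc2, hce1, hce2⟩
      · refine Or.inl ?_
        have h : a * b * c = a1 * (x * x) * b2 * c := by rw [hae1, hbe2]; group
        rw [h]
        exact H.mul_mem (H.mul_mem (H.mul_mem ha1 hxx) hb2) hc
      · refine Or.inr (Or.inl ⟨a1 * (x * x) * b2 * c1, 1,
          H.mul_mem (H.mul_mem (H.mul_mem ha1 hxx) hb2) hc1, H.one_mem, ?_⟩)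
        rw [hae1, hbe2, hce1]; group

private lemma cube_sub {K : Type*} [Group K] (H : Subgroup K) (x : K) (hx2 : x ^ 2 ∈ H)
    (S : Set K) (hS : S = (H : Set K) ∪ {x, x⁻¹}) :
    ∀ g ∈ S * S * S, g ∈ H ∨ InHxH H x g ∨ InxHx H x g := by
  intro g hg
  rcases Set.mem_mul.mp hg with ⟨p, hp, c, hcS, hpc⟩
  rcases Set.mem_mul.mp hp with ⟨a, haS, b, hbS, hab⟩
  have h : g = a * b * c := by rw [← hpc, ← hab]
  rw [h]
  exact triple_mem H x hx2 a b c (S_mem H x hx2 S hS a haS) (S_mem H x hx2 S hS b hbS)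
    (S_mem H x hx2 S hS c hcS)

/-- If `xHx ⊆ H ∪ HxH`, then `H ∪ HxH` is a subgroup, hence everything. -/
private lemma closed_all {K : Type*} [Group K] (H : Subgroup K) (x : K) (hx2 : x ^ 2 ∈ H)
    (hgen : H ⊔ Subgroup.zpowers x = ⊤)
    (hB : ∀ u ∈ H, (x * u * x ∈ H ∨ InHxH H x (x * u * x))) :
    ∀ g : K, g ∈ H ∨ InHxH H x g := by
  have mul_cl : ∀ a b : K, (a ∈ H ∨ InHxH H x a) → (b ∈ H ∨ InHxH H x b) →
      (a * b ∈ H ∨ InHxH H x (a * b)) := by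
    intro a b ha hb
    rcases ha with ha | ⟨a1, a2, ha1, ha2, hae⟩
    · rcases hb with hb | ⟨b1, b2, hb1, hb2, hbe⟩
      · exact Or.inl (H.mul_mem ha hb)
      · exact Or.inr ⟨a * b1, b2, H.mul_mem ha hb1, hb2, by rw [hbe]; group⟩
    · rcases hb with hb | ⟨b1, b2, hb1, hb2, hbe⟩
      · exact Or.inr ⟨a1, a2 * b, ha1, H.mul_mem ha2 hb, by rw [hae]; group⟩
      · rcases hB (a2 * b1) (H.mul_mem ha2 hb1) with hv | ⟨c1, c2, hc1, hc2, hve⟩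
        · refine Or.inl ?_
          have h : a * b = a1 * (x * (a2 * b1) * x) * b2 := by rw [hae, hbe]; group
          rw [h]
          exact H.mul_mem (H.mul_mem ha1 hv) hb2
        · refine Or.inr ⟨a1 * c1, c2 * b2, H.mul_mem ha1 hc1, H.mul_mem hc2 hb2, ?_⟩
          have h : a * b = a1 * (x * (a2 * b1) * x) * b2 := by rw [hae, hbe]; group
          rw [h, hve]; group
  have inv_cl : ∀ a : K, (a ∈ H ∨ InHxH H x a) → (a⁻¹ ∈ H ∨ InHxH H x a⁻¹) := by
    intro a ha
    rcases ha with ha | ⟨a1, a2, ha1, ha2, hae⟩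
    · exact Or.inl (H.inv_mem ha)
    · exact Or.inr ⟨a2⁻¹ * (x ^ 2)⁻¹, a1⁻¹, H.mul_mem (H.inv_mem ha2) (H.inv_mem hx2),
        H.inv_mem ha1, by rw [hae]; group⟩
  let D : Subgroup K :=
    { carrier := {g : K | g ∈ H ∨ InHxH H x g}
      one_mem' := Or.inl H.one_mem
      mul_mem' := fun {a b} ha hb => mul_cl a b ha hb
      inv_mem' := fun {a} ha => inv_cl a ha }
  have hHD : H ≤ D := fun h hh => Or.inl hh
  have hxD : x ∈ D := Or.inr ⟨1, 1, H.one_mem, H.one_mem, by group⟩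
  have htop : (⊤ : Subgroup K) ≤ D := by
    rw [← hgen]
    exact sup_le hHD (Subgroup.zpowers_le.mpr hxD)
  intro g
  exact htop (Subgroup.mem_top g)

theorem stmt9 {K : Type*} [Group K] [Finite K] (H : Subgroup K) (hH : ¬ H.Normal)
    (x : K) (horder : 2 < orderOf x) (hgen : H ⊔ Subgroup.zpowers x = ⊤) (hx2 : x ^ 2 ∈ H)
    (S : Set K) (hS : S = (H : Set K) ∪ {x, x⁻¹}) (hS3 : S * S * S ≠ Set.univ)
    (T : Set K) (hTsym : T⁻¹ = T) (hST : S ⊆ T) (hT3 : T * T * T = S * S * S) :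
    T ⊆ (H : Set K) ∪ (((H : Set K) * {x}) ∩ ({x} * (H : Set K))) := by
  have hHS : (H : Set K) ⊆ S := by rw [hS]; exact Set.subset_union_left
  have h1T : (1 : K) ∈ T := hST (hHS H.one_mem)
  have hxS : x ∈ S := by rw [hS]; exact Or.inr (Set.mem_insert x _)
  have hxT : x ∈ T := hST hxS
  -- existence of u with x*u*x ∉ H ∪ HxH
  have hu : ∃ u : K, u ∈ H ∧ ¬ (x * u * x ∈ H) ∧ ¬ InHxH H x (x * u * x) := by
    by_contra hcon
    push_neg at hcon
    have hB : ∀ u ∈ H, (x * u * x ∈ H ∨ InHxH H x (x * u * x)) := by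
      intro u hu
      by_cases h : x * u * x ∈ H
      · exact Or.inl h
      · exact Or.inr (hcon u hu h)
    have hall := closed_all H x hx2 hgen hB
    apply hS3
    apply Set.eq_univ_of_forall
    intro g
    rcases hall g with hg | ⟨h1, h2, hh1, hh2, hge⟩
    · have : g * 1 * 1 ∈ S * S * S :=
        Set.mul_mem_mul (Set.mul_mem_mul (hHS hg) (hHS H.one_mem)) (hHS H.one_mem)
      simpa using this
    · rw [hge]
      exact Set.mul_mem_mul (Set.mul_mem_mul (hHS hh1) hxS) (hHS hh2)
  obtain ⟨u, huH, hu1, hu2⟩ := hu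
  -- main argument for elements of HxH
  intro t htT
  have main : InHxH H x t → t ∈ (H : Set K) ∪ (((H : Set K) * {x}) ∩ ({x} * (H : Set K))) := by
    rintro ⟨h1, h2, hh1, hh2, hte⟩
    -- first product : t * (h2⁻¹ * u) * x = h1 * (x*u*x)
    have hp1 : t * (h2⁻¹ * u) * x ∈ S * S * S := by
      rw [← hT3]
      exact Set.mul_mem_mul (Set.mul_mem_mul htT (hST (hHS (H.mul_mem (H.inv_mem hh2) huH)))) hxT
    have hp1e : t * (h2⁻¹ * u) * x = h1 * (x * u * x) := by rw [hte]; group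
    rw [hp1e] at hp1
    have hc1 : x⁻¹ * h1 * x ∈ H := by
      rcases cube_sub H x hx2 S hS _ hp1 with hg | ⟨a, b, haH, hbH, hge⟩ | ⟨h'', hmem, he⟩
      · exfalso
        apply hu1
        have h : x * u * x = h1⁻¹ * (h1 * (x * u * x)) := by group
        rw [h]
        exact H.mul_mem (H.inv_mem hh1) hg
      · exfalso
        apply hu2
        refine ⟨h1⁻¹ * a, b, H.mul_mem (H.inv_mem hh1) haH, hbH, ?_⟩
        have h : x * u * x = h1⁻¹ * (h1 * (x * u * x)) := by group
        rw [h, hge]; group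
      · have e1 : x⁻¹ * h1 * x = x⁻¹ * (h1 * (x * u * x)) * x⁻¹ * u⁻¹ := by group
        rw [he] at e1
        have e2 : x⁻¹ * (x * h'' * x) * x⁻¹ * u⁻¹ = h'' * u⁻¹ := by group
        rw [e2] at e1
        rw [e1]
        exact H.mul_mem hmem (H.inv_mem huH)
    -- second product : x * (u * h1⁻¹) * t = (x*u*x) * h2
    have hp2 : x * (u * h1⁻¹) * t ∈ S * S * S := by
      rw [← hT3]
      exact Set.mul_mem_mul (Set.mul_mem_mul hxT (hST (hHS (H.mul_mem huH (H.inv_mem hh1))))) htT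
    have hp2e : x * (u * h1⁻¹) * t = (x * u * x) * h2 := by rw [hte]; group
    rw [hp2e] at hp2
    have hc2 : x * h2 * x⁻¹ ∈ H := by
      rcases cube_sub H x hx2 S hS _ hp2 with hg | ⟨a, b, haH, hbH, hge⟩ | ⟨h'', hmem, he⟩
      · exfalso
        apply hu1
        have h : x * u * x = ((x * u * x) * h2) * h2⁻¹ := by group
        rw [h]
        exact H.mul_mem hg (H.inv_mem hh2)
      · exfalso
        apply hu2
        refine ⟨a, b * h2⁻¹, haH, H.mul_mem hbH (H.inv_mem hh2), ?_⟩
        have h : x * u * x = ((x * u * x) * h2) * h2⁻¹ := by group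
        rw [h, hge]; group
      · have e1 : x * h2 * x⁻¹ = u⁻¹ * x⁻¹ * ((x * u * x) * h2) * x⁻¹ := by group
        rw [he] at e1
        have e2 : u⁻¹ * x⁻¹ * (x * h'' * x) * x⁻¹ = u⁻¹ * h'' := by group
        rw [e2] at e1
        rw [e1]
        exact H.mul_mem (H.inv_mem huH) hmem
    refine Or.inr ⟨?_, ?_⟩
    · refine Set.mem_mul.mpr ⟨h1 * (x * h2 * x⁻¹), H.mul_mem hh1 hc2, x, rfl, ?_⟩
      rw [hte]; group
    · refine Set.mem_mul.mpr ⟨x, rfl, (x⁻¹ * h1 * x) * h2, H.mul_mem hc1 hh2, ?_⟩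
      rw [hte]; group
  -- classify t
  have htS3 : t ∈ S * S * S := by
    rw [← hT3]
    have : t * 1 * 1 ∈ T * T * T := Set.mul_mem_mul (Set.mul_mem_mul htT h1T) h1T
    simpa using this
  rcases cube_sub H x hx2 S hS t htS3 with ht | ht | ⟨h3, hh3, hte⟩
  · exact Or.inl ht
  · exact main ht
  · by_cases htH : t ∈ H
    · exact Or.inl htH
    by_cases htHxH : InHxH H x t
    · exact main htHxH
    exfalso
    -- t = x*h3*x, not in H nor HxH : derive that x normalizes H
    have hconj : ∀ h ∈ H, x⁻¹ * h * x ∈ H := by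
      intro h hh
      have hp : h * t * 1 ∈ S * S * S := by
        rw [← hT3]
        exact Set.mul_mem_mul (Set.mul_mem_mul (hST (hHS hh)) htT) h1T
      rcases cube_sub H x hx2 S hS _ hp with hg | ⟨a, b, haH, hbH, hge⟩ | ⟨h'', hmem, he⟩
      · exfalso
        apply htH
        have e : t = h⁻¹ * (h * t * 1) := by group
        rw [e]
        exact H.mul_mem (H.inv_mem hh) hg
      · exfalso
        apply htHxH
        refine ⟨h⁻¹ * a, b, H.mul_mem (H.inv_mem hh) haH, hbH, ?_⟩
        have e : t = h⁻¹ * (h * t * 1) := by group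
        rw [e, hge]; group
      · have e1 : x⁻¹ * h * x = x⁻¹ * (h * t * 1) * x⁻¹ * h3⁻¹ := by rw [hte]; group
        rw [he] at e1
        have e2 : x⁻¹ * (x * h'' * x) * x⁻¹ * h3⁻¹ = h'' * h3⁻¹ := by group
        rw [e2] at e1
        rw [e1]
        exact H.mul_mem hmem (H.inv_mem hh3)
    have hxinvN : x⁻¹ ∈ Subgroup.normalizer (H : Set K) := by
      apply Subgroup.mem_normalizer_iff.mpr
      have h := Subgroup.mem_normalizer_fintype (S := (H : Set K)) (x := x⁻¹)
        (fun n hn => by simpa using hconj n hn)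
      exact fun n => h n
    have hxN : x ∈ Subgroup.normalizer (H : Set K) := by
      have := (Subgroup.normalizer (H : Set K)).inv_mem hxinvN
      simpa using this
    have htop : Subgroup.normalizer (H : Set K) = ⊤ := by
      apply le_antisymm le_top
      rw [← hgen]
      exact sup_le H.le_normalizer (Subgroup.zpowers_le.mpr hxN)
    exact hH (Subgroup.normalizer_eq_top_iff.mp htop)
end

section
/- Let H be a proper subgroup of a finite group K and x ∈ K with ⟨H, x⟩ = K, x² ∈ H, and |HxH| = 2|H|. Then L = H ∩ x⁻¹Hx is a normal subgroup of K. -/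
open Pointwise

theorem stmt11 {K : Type*} [Group K] [Finite K] (H : Subgroup K) (hH : H ≠ ⊤)
    (x : K) (hgen : H ⊔ Subgroup.zpowers x = ⊤) (hx2 : x ^ 2 ∈ H)
    (hcard : ((H : Set K) * {x} * (H : Set K)).ncard = 2 * Nat.card H) :
    (H ⊓ Subgroup.map (MulAut.conj x⁻¹).toMonoidHom H).Normal := by
  set L := H ⊓ Subgroup.map (MulAut.conj x⁻¹).toMonoidHom H with hLdef
  -- membership characterization of L
  have hmem : ∀ g : K, g ∈ L ↔ g ∈ H ∧ x * g * x⁻¹ ∈ H := by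
    intro g
    simp only [hLdef, Subgroup.mem_inf, Subgroup.mem_map, MulEquiv.coe_toMonoidHom,
      MulAut.conj_apply]
    constructor
    · rintro ⟨hg, h, hh, rfl⟩
      refine ⟨hg, ?_⟩
      rwa [show x * (x⁻¹ * h * x⁻¹⁻¹) * x⁻¹ = h by group]
    · rintro ⟨hg, hg2⟩
      exact ⟨hg, ⟨x * g * x⁻¹, hg2, by group⟩⟩
  have hHpos : 0 < Nat.card H := Nat.card_pos
  -- right cosets H * g as images
  have hr_card : ∀ g : K, ((fun a => a * g) '' (H : Set K)).ncard = Nat.card H := by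
    intro g
    rw [Set.ncard_image_of_injective _ (mul_left_injective g)]
    simp [← Nat.card_coe_set_eq]
  have hr_disj : ∀ g₁ g₂ : K, g₂ * g₁⁻¹ ∉ H →
      Disjoint ((fun a => a * g₁) '' (H : Set K)) ((fun a => a * g₂) '' (H : Set K)) := by
    intro g₁ g₂ hg
    rw [Set.disjoint_left]
    rintro _ ⟨a, ha, rfl⟩ ⟨b, hb, heq⟩
    apply hg
    have heq' : b * g₂ = a * g₁ := heq
    have : g₂ * g₁⁻¹ = b⁻¹ * a := by
      rw [eq_inv_mul_iff_mul_eq, ← mul_assoc, heq']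
      group
    rw [this]
    exact mul_mem (inv_mem hb) ha
  have hr_sub : ∀ h : K, h ∈ H → (fun a => a * (x * h)) '' (H : Set K) ⊆
      (H : Set K) * {x} * (H : Set K) := by
    rintro h hh _ ⟨a, ha, rfl⟩
    show a * (x * h) ∈ _
    rw [show a * (x * h) = a * x * h by group]
    exact Set.mul_mem_mul (Set.mul_mem_mul ha rfl) hh
  -- key combinatorial lemma
  have key : ∀ h₁ h₂ : K, h₁ ∈ H → h₂ ∈ H → x * h₁ * x⁻¹ ∉ H → x * h₂ * x⁻¹ ∉ H →
      x * (h₁ * h₂⁻¹) * x⁻¹ ∈ H := by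
    intro h₁ h₂ hh₁ hh₂ hn₁ hn₂
    by_contra hcon
    set r : K → Set K := fun g => (fun a => a * g) '' (H : Set K) with hrdef
    have d01 : Disjoint (r x) (r (x * h₁)) := by
      apply hr_disj
      rwa [show x * h₁ * x⁻¹ = x * h₁ * x⁻¹ from rfl] at hn₁
    have d02 : Disjoint (r x) (r (x * h₂)) := by
      apply hr_disj
      exact hn₂
    have d12 : Disjoint (r (x * h₁)) (r (x * h₂)) := by
      apply hr_disj
      intro hmemH
      apply hcon
      have : x * (h₁ * h₂⁻¹) * x⁻¹ = (x * h₂ * (x * h₁)⁻¹)⁻¹ := by group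
      rw [this]
      exact inv_mem hmemH
    have hsub : r x ∪ (r (x * h₁) ∪ r (x * h₂)) ⊆ (H : Set K) * {x} * (H : Set K) := by
      apply Set.union_subset
      · rintro _ ⟨a, ha, rfl⟩
        show a * x ∈ _
        have h1 : a * x ∈ (H : Set K) * {x} := Set.mul_mem_mul ha rfl
        simpa using Set.mul_mem_mul h1 (one_mem H)
      · exact Set.union_subset (hr_sub h₁ hh₁) (hr_sub h₂ hh₂)
    have hunion : (r x ∪ (r (x * h₁) ∪ r (x * h₂))).ncard = 3 * Nat.card H := by
      rw [Set.ncard_union_eq (Disjoint.union_right d01 d02) (Set.toFinite _) (Set.toFinite _),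
        Set.ncard_union_eq d12 (Set.toFinite _) (Set.toFinite _), hr_card, hr_card, hr_card]
      ring
    have hle : (r x ∪ (r (x * h₁) ∪ r (x * h₂))).ncard ≤
        ((H : Set K) * {x} * (H : Set K)).ncard :=
      Set.ncard_le_ncard hsub (Set.toFinite _)
    rw [hunion, hcard] at hle
    omega
  -- H normalizes L
  have hnormH : ∀ h : K, h ∈ H → ∀ l : K, l ∈ L → h * l * h⁻¹ ∈ L := by
    intro h hh l hl
    by_cases hhL : h ∈ L
    · exact mul_mem (mul_mem hhL hl) (inv_mem hhL)
    · have hl' := (hmem l).1 hl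
      have hhl : h * l ∈ H := mul_mem hh hl'.1
      have hhlL : h * l ∉ L := by
        intro hc
        apply hhL
        have : h = h * l * l⁻¹ := by group
        rw [this]
        exact mul_mem hc (inv_mem hl)
      have hn1 : x * (h * l) * x⁻¹ ∉ H := fun hc => hhlL ((hmem _).2 ⟨hhl, hc⟩)
      have hn2 : x * h * x⁻¹ ∉ H := fun hc => hhL ((hmem _).2 ⟨hh, hc⟩)
      have hk := key (h * l) h hhl hh hn1 hn2
      refine (hmem _).2 ⟨mul_mem hhl (inv_mem hh), ?_⟩
      rwa [show x * (h * l * h⁻¹) * x⁻¹ = x * (h * l * h⁻¹) * x⁻¹ from rfl,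
        show h * l * h⁻¹ = h * l * h⁻¹ from rfl] at hk
  -- conjugation by x^2 preserves H
  have hsq : ∀ n : K, n ∈ H ↔ x ^ 2 * n * (x ^ 2)⁻¹ ∈ H := by
    intro n
    constructor
    · intro h
      exact mul_mem (mul_mem hx2 h) (inv_mem hx2)
    · intro h
      have h2 := mul_mem (mul_mem (inv_mem hx2) h) hx2
      rwa [show (x ^ 2)⁻¹ * (x ^ 2 * n * (x ^ 2)⁻¹) * x ^ 2 = n by group] at h2
  -- x normalizes L
  have hxnorm : x ∈ Subgroup.normalizer (L : Set K) := by
    rw [Subgroup.mem_normalizer_iff]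
    intro n
    rw [hmem, hmem]
    constructor
    · rintro ⟨h1, h2⟩
      refine ⟨h2, ?_⟩
      rw [show x * (x * n * x⁻¹) * x⁻¹ = (x * x) * n * (x * x)⁻¹ by group, ← sq]
      exact (hsq n).1 h1
    · rintro ⟨h1, h2⟩
      refine ⟨(hsq n).2 ?_, h1⟩
      rwa [show x * (x * n * x⁻¹) * x⁻¹ = (x * x) * n * (x * x)⁻¹ by group, ← sq] at h2
  -- H is contained in the normalizer
  have hHnorm : H ≤ Subgroup.normalizer (L : Set K) := by
    intro h hh
    rw [Subgroup.mem_normalizer_iff]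
    intro n
    constructor
    · exact fun hn => hnormH h hh n hn
    · intro hn
      have := hnormH h⁻¹ (inv_mem hh) _ hn
      rwa [show h⁻¹ * (h * n * h⁻¹) * h⁻¹⁻¹ = n by group] at this
  have htop : Subgroup.normalizer (L : Set K) = ⊤ := by
    rw [eq_top_iff, ← hgen]
    exact sup_le hHnorm (Subgroup.zpowers_le.2 hxnorm)
  exact Subgroup.normalizer_eq_top_iff.mp htop
end

section
/- For every real k ≥ 1 and every real l ≥ 2, the function f_l(k) = log(l·k·(k+1)) / log(l·(k+1)) is strictly increasing in k. -/
theorem stmt12 : ∀ l : ℝ, 2 ≤ l → StrictMonoOn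
    (fun k : ℝ => Real.logb 2 (l * k * (k + 1)) / Real.logb 2 (l * (k + 1)))
    (Set.Ici 1) := by
  intro l hl x hx y hy hxy
  simp only [Set.mem_Ici] at hx hy
  have hx0 : (0:ℝ) < x := by linarith
  have hy0 : (0:ℝ) < y := by linarith
  have hl0 : (0:ℝ) < l := by linarith
  have hx1 : (0:ℝ) < x + 1 := by linarith
  have hy1 : (0:ℝ) < y + 1 := by linarith
  have hA : 0 < Real.logb 2 (l * (x + 1)) :=
    Real.logb_pos one_lt_two (by nlinarith)
  have hB : 0 < Real.logb 2 (l * (y + 1)) :=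
    Real.logb_pos one_lt_two (by nlinarith)
  simp only
  rw [div_lt_div_iff₀ hA hB]
  have hmul : ∀ u v : ℝ, 0 < u → 0 < v →
      Real.logb 2 (u * v) = Real.logb 2 u + Real.logb 2 v := by
    intro u v hu hv
    exact Real.logb_mul hu.ne' hv.ne'
  rw [hmul (l * x) (x + 1) (by positivity) hx1, hmul l x hl0 hx0,
      hmul (l * y) (y + 1) (by positivity) hy1, hmul l y hl0 hy0,
      hmul l (x + 1) hl0 hx1, hmul l (y + 1) hl0 hy1]
  set L := Real.logb 2 l with hLdef
  set a := Real.logb 2 x with hadef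
  set b := Real.logb 2 y with hbdef
  set px := Real.logb 2 (x + 1) with hpxdef
  set py := Real.logb 2 (y + 1) with hpydef
  -- facts
  have hLpos : 0 < L := Real.logb_pos one_lt_two (by linarith)
  have ha0 : 0 ≤ a := Real.logb_nonneg one_lt_two hx
  have hab : a < b := Real.logb_lt_logb one_lt_two hx0 hxy
  -- px = a + cx, py = b + cy where cx = logb((x+1)/x), cy likewise
  have hpx : px = a + Real.logb 2 ((x + 1) / x) := by
    rw [hpxdef, hadef, ← hmul _ _ hx0 (by positivity), mul_div_cancel₀ _ hx0.ne']
  have hpy : py = b + Real.logb 2 ((y + 1) / y) := by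
    rw [hpydef, hbdef, ← hmul _ _ hy0 (by positivity), mul_div_cancel₀ _ hy0.ne']
  set cx := Real.logb 2 ((x + 1) / x) with hcxdef
  set cy := Real.logb 2 ((y + 1) / y) with hcydef
  have hcy0 : 0 ≤ cy := Real.logb_nonneg one_lt_two (by
    rw [le_div_iff₀ hy0]; linarith)
  have hcyx : cy ≤ cx := by
    rw [hcydef, hcxdef]
    have : (y + 1) / y ≤ (x + 1) / x := by
      rw [div_le_div_iff₀ hy0 hx0]; nlinarith
    exact Real.logb_le_logb_of_le one_lt_two (by positivity) this
  have key : a * cy ≤ b * cx :=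
    mul_le_mul hab.le hcyx hcy0 (by linarith)
  rw [hpx, hpy]
  nlinarith [mul_pos hLpos (sub_pos.mpr hab)]
end

section
/- For every real k ≥ 1 and every real l ≥ 2, the function g_l(k) = log(l·k·(2k+1)) / log(l·(k+1)) is strictly increasing in k. -/
theorem stmt13 : ∀ l : ℝ, 2 ≤ l → StrictMonoOn
    (fun k : ℝ => Real.logb 2 (l * k * (2 * k + 1)) / Real.logb 2 (l * (k + 1)))
    (Set.Ici 1) := by
  intro l hl
  have hl0 : (0:ℝ) < l := by linarith
  have hfun : (fun k : ℝ => Real.logb 2 (l * k * (2 * k + 1)) / Real.logb 2 (l * (k + 1)))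
      = fun k : ℝ => Real.log (l * k * (2 * k + 1)) / Real.log (l * (k + 1)) := by
    funext k
    rw [Real.logb, Real.logb, div_div_div_cancel_right₀]
    exact ne_of_gt (Real.log_pos one_lt_two)
  rw [hfun]
  apply strictMonoOn_of_deriv_pos (convex_Ici 1)
  · apply ContinuousOn.div
    · apply ContinuousOn.log
      · fun_prop
      · intro x hx
        have hx1 : (1:ℝ) ≤ x := hx
        positivity
    · apply ContinuousOn.log
      · fun_prop
      · intro x hx
        have hx1 : (1:ℝ) ≤ x := hx
        positivity
    · intro x hx
      have hx1 : (1:ℝ) ≤ x := hx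
      have hB : (1:ℝ) < l * (x + 1) := by nlinarith
      exact ne_of_gt (Real.log_pos hB)
  · intro x hx
    rw [interior_Ici] at hx
    have hx1 : (1:ℝ) < x := hx
    have hxpos : (0:ℝ) < x := by linarith
    have hA : (0:ℝ) < l * x * (2 * x + 1) := by positivity
    have hB : (1:ℝ) < l * (x + 1) := by nlinarith
    have hD : (0:ℝ) < Real.log (l * (x + 1)) := Real.log_pos hB
    have hDne : Real.log (l * (x + 1)) ≠ 0 := ne_of_gt hD
    have hN : HasDerivAt (fun k : ℝ => Real.log (l * k * (2 * k + 1)))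
        (l * (4 * x + 1) / (l * x * (2 * x + 1))) x := by
      have hu : HasDerivAt (fun k : ℝ => l * k * (2 * k + 1)) (l * (4 * x + 1)) x := by
        have h := ((hasDerivAt_id x).const_mul l).mul
          (((hasDerivAt_id x).const_mul 2).add_const 1)
        refine h.congr_deriv ?_
        simp only [id_eq]
        ring
      exact hu.log (ne_of_gt hA)
    have hDd : HasDerivAt (fun k : ℝ => Real.log (l * (k + 1))) (l / (l * (x + 1))) x := by
      have hu : HasDerivAt (fun k : ℝ => l * (k + 1)) l x := by
        have h := ((hasDerivAt_id x).add_const 1).const_mul l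
        refine h.congr_deriv ?_
        ring
      exact hu.log (by positivity)
    have hf : HasDerivAt (fun k : ℝ => Real.log (l * k * (2 * k + 1)) / Real.log (l * (k + 1))) _ x := hN.div hDd hDne
    rw [hf.deriv]
    have e1 : l * (4 * x + 1) / (l * x * (2 * x + 1)) = (4 * x + 1) / (x * (2 * x + 1)) := by
      rw [mul_assoc l x, mul_div_mul_left _ _ (ne_of_gt hl0)]
    have e2 : l / (l * (x + 1)) = 1 / (x + 1) := by
      rw [div_mul_eq_div_div, div_self (ne_of_gt hl0)]
    rw [e1, e2]
    apply div_pos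
    · have hsq : l * x * (2 * x + 1) ≤ (l * (x + 1)) ^ 2 := by
        nlinarith [mul_le_mul_of_nonneg_right hl (by positivity : (0:ℝ) ≤ (x + 1) ^ 2),
          mul_le_mul_of_nonneg_left (show x * (2 * x + 1) ≤ 2 * (x + 1) ^ 2 by nlinarith)
            hl0.le]
      have hN2D : Real.log (l * x * (2 * x + 1)) ≤ 2 * Real.log (l * (x + 1)) := by
        have h2 : (2 : ℝ) * Real.log (l * (x + 1)) = Real.log ((l * (x + 1)) ^ 2) := by
          rw [Real.log_pow]; norm_num
        rw [h2]
        exact Real.log_le_log hA hsq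
      have hkey : 2 / (x + 1) < (4 * x + 1) / (x * (2 * x + 1)) := by
        rw [div_lt_div_iff₀ (by positivity) (by positivity)]
        nlinarith
      have step1 := mul_le_mul_of_nonneg_right hN2D
        (by positivity : (0:ℝ) ≤ 1 / (x + 1))
      have step3 : 2 * Real.log (l * (x + 1)) * (1 / (x + 1))
          < (4 * x + 1) / (x * (2 * x + 1)) * Real.log (l * (x + 1)) := by
        have h := mul_lt_mul_of_pos_left hkey hD
        ring_nf at h ⊢
        linarith [h]
      linarith [step1, step3]
    · positivity
end

section
/- Let H be a proper subgroup of a finite group K and L = x⁻¹Hx ∩ H for some x ∈ K. If L is the unique subgroup of H of index [H : L], then x⁻¹Lx = L. -/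
theorem stmt14 {K : Type*} [Group K] [Finite K] (H : Subgroup K) (hH : H ≠ ⊤) (x : K)
    (L : Subgroup K) (hL : L = Subgroup.map (MulAut.conj x⁻¹).toMonoidHom H ⊓ H)
    (huniq : ∀ M : Subgroup K, M ≤ H →
      (M.subgroupOf H).index = (L.subgroupOf H).index → M = L) :
    Subgroup.map (MulAut.conj x⁻¹).toMonoidHom L = L := by
  have hinv : MulAut.conj x⁻¹ = (MulAut.conj x)⁻¹ := map_inv MulAut.conj x
  rw [hinv] at hL ⊢
  set e := MulAut.conj x with he
  have hLH : L ≤ H := hL ▸ inf_le_right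
  have hLe : L ≤ Subgroup.map (e⁻¹).toMonoidHom H := by
    rw [hL]; exact inf_le_left
  have hM : Subgroup.map e.toMonoidHom L ≤ H := by
    intro y hy
    obtain ⟨z, hz, rfl⟩ := hy
    obtain ⟨w, hw, hwz⟩ := hLe hz
    simpa [← hwz] using hw
  have hcard : Nat.card (Subgroup.map e.toMonoidHom L) = Nat.card L :=
    Nat.card_congr (L.equivMapOfInjective e.toMonoidHom e.injective).toEquiv.symm
  have key : ∀ N : Subgroup K, N ≤ H → (N.subgroupOf H).index * Nat.card N = Nat.card H := by
    intro N hN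
    have h1 := Subgroup.index_mul_card (N.subgroupOf H)
    have h2 : Nat.card (N.subgroupOf H) = Nat.card N :=
      Nat.card_congr (Subgroup.subgroupOfEquivOfLe hN).toEquiv
    rw [h2] at h1
    simpa using h1
  have hcardL : 0 < Nat.card L := Nat.card_pos
  have hidx : ((Subgroup.map e.toMonoidHom L).subgroupOf H).index = (L.subgroupOf H).index := by
    have := key _ hM
    rw [hcard, ← key L hLH] at this
    exact Nat.eq_of_mul_eq_mul_right hcardL this
  have hML : Subgroup.map e.toMonoidHom L = L := huniq _ hM hidx
  calc Subgroup.map (e⁻¹).toMonoidHom L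
      = Subgroup.map (e⁻¹).toMonoidHom (Subgroup.map e.toMonoidHom L) := by rw [hML]
    _ = L := by
        rw [Subgroup.map_map]
        convert Subgroup.map_id L
        ext y; simp
end

section
/- Let p ≥ 5 be prime, let U be the group of upper triangular matrices in SL(2,p), let H ≤ U contain the subgroup N of upper unitriangular matrices, and let x ∈ SL(2,p) \ U. Then [H : H ∩ x⁻¹Hx] = p, and hence |HxH| = p|H|. -/
open Pointwise

namespace Stmt16Aux

variable {p : ℕ}

local notation:1024 "↑ₘ" A:1024 =>
  ((A : Matrix.SpecialLinearGroup (Fin 2) (ZMod p)) : Matrix (Fin 2) (Fin 2) (ZMod p))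

lemma mul_entry (A B : Matrix.SpecialLinearGroup (Fin 2) (ZMod p)) (i j : Fin 2) :
    ↑ₘ(A * B) i j = ↑ₘA i 0 * ↑ₘB 0 j + ↑ₘA i 1 * ↑ₘB 1 j := by
  simp [Matrix.mul_apply, Fin.sum_univ_two]

lemma inv_entry (A : Matrix.SpecialLinearGroup (Fin 2) (ZMod p)) :
    ↑ₘ(A⁻¹) = !![↑ₘA 1 1, -(↑ₘA 0 1); -(↑ₘA 1 0), ↑ₘA 0 0] := by
  rw [Matrix.SpecialLinearGroup.SL2_inv_expl]
  ext i j; fin_cases i <;> fin_cases j <;> rfl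

lemma det_entry (A : Matrix.SpecialLinearGroup (Fin 2) (ZMod p)) :
    ↑ₘA 0 0 * ↑ₘA 1 1 - ↑ₘA 0 1 * ↑ₘA 1 0 = 1 := by
  have := A.2
  rwa [Matrix.det_fin_two] at this

def nelt (p : ℕ) (t : ZMod p) : Matrix.SpecialLinearGroup (Fin 2) (ZMod p) :=
  ⟨!![1, t; 0, 1], by simp [Matrix.det_fin_two_of]⟩

@[simp] lemma nelt_00 (t : ZMod p) : ↑ₘ(nelt p t) 0 0 = 1 := rfl
@[simp] lemma nelt_01 (t : ZMod p) : ↑ₘ(nelt p t) 0 1 = t := rfl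
@[simp] lemma nelt_10 (t : ZMod p) : ↑ₘ(nelt p t) 1 0 = 0 := rfl
@[simp] lemma nelt_11 (t : ZMod p) : ↑ₘ(nelt p t) 1 1 = 1 := rfl

lemma nelt_mul (s t : ZMod p) : nelt p s * nelt p t = nelt p (s + t) := by
  ext i j
  fin_cases i <;> fin_cases j <;>
    simp [mul_entry, add_comm]

lemma nelt_zero : nelt p 0 = 1 := by
  ext i j
  fin_cases i <;> fin_cases j <;>
    simp [nelt, Matrix.one_apply]

lemma nelt_inv (t : ZMod p) : (nelt p t)⁻¹ = nelt p (-t) := by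
  apply inv_eq_of_mul_eq_one_right
  rw [nelt_mul]
  simp [nelt_zero]

lemma conj_entries (x A : Matrix.SpecialLinearGroup (Fin 2) (ZMod p))
    (hA : ↑ₘA 1 0 = 0) :
    ↑ₘ(x * A * x⁻¹) 1 0 =
      ↑ₘx 1 0 * ↑ₘx 1 1 * ↑ₘA 0 0 - ↑ₘx 1 0 * ↑ₘx 1 0 * ↑ₘA 0 1 -
        ↑ₘx 1 0 * ↑ₘx 1 1 * ↑ₘA 1 1 ∧
    ↑ₘ(x * A * x⁻¹) 0 0 =
      ↑ₘx 0 0 * ↑ₘx 1 1 * ↑ₘA 0 0 - ↑ₘx 0 0 * ↑ₘx 1 0 * ↑ₘA 0 1 -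
        ↑ₘx 0 1 * ↑ₘx 1 0 * ↑ₘA 1 1 := by
  constructor <;>
  · rw [mul_entry, mul_entry, mul_entry, inv_entry]
    simp [hA]
    ring

def gmap (p : ℕ) (H : Subgroup (Matrix.SpecialLinearGroup (Fin 2) (ZMod p)))
    (x : Matrix.SpecialLinearGroup (Fin 2) (ZMod p)) :
    H × ZMod p → Matrix.SpecialLinearGroup (Fin 2) (ZMod p) :=
  fun y => (y.1 : Matrix.SpecialLinearGroup (Fin 2) (ZMod p)) * x * nelt p y.2

end Stmt16Aux

open Stmt16Aux in
theorem stmt16 {p : ℕ} (hp : p.Prime) (hp5 : 5 ≤ p)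
    (H : Subgroup (Matrix.SpecialLinearGroup (Fin 2) (ZMod p)))
    (hHU : ∀ A ∈ H, (A : Matrix (Fin 2) (Fin 2) (ZMod p)) 1 0 = 0)
    (hNH : ∀ A : Matrix.SpecialLinearGroup (Fin 2) (ZMod p),
      (A : Matrix (Fin 2) (Fin 2) (ZMod p)) 0 0 = 1 →
      (A : Matrix (Fin 2) (Fin 2) (ZMod p)) 1 0 = 0 →
      (A : Matrix (Fin 2) (Fin 2) (ZMod p)) 1 1 = 1 → A ∈ H)
    (x : Matrix.SpecialLinearGroup (Fin 2) (ZMod p))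
    (hx : (x : Matrix (Fin 2) (Fin 2) (ZMod p)) 1 0 ≠ 0) :
    ((H ⊓ Subgroup.map (MulAut.conj x⁻¹).toMonoidHom H).subgroupOf H).index = p ∧
    ((H : Set (Matrix.SpecialLinearGroup (Fin 2) (ZMod p))) * {x} *
      (H : Set (Matrix.SpecialLinearGroup (Fin 2) (ZMod p)))).ncard = p * Nat.card H := by
  haveI : Fact p.Prime := ⟨hp⟩
  set K := H ⊓ Subgroup.map (MulAut.conj x⁻¹).toMonoidHom H with hKdef
  have hmapmem : ∀ A : Matrix.SpecialLinearGroup (Fin 2) (ZMod p),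
      (A ∈ Subgroup.map (MulAut.conj x⁻¹).toMonoidHom H ↔ x * A * x⁻¹ ∈ H) := by
    intro A; rw [Subgroup.mem_map_equiv]; simp [MulAut.conj]
  have hH1 : ∀ A ∈ H, (A : Matrix (Fin 2) (Fin 2) (ZMod p)) 0 0 *
      (A : Matrix (Fin 2) (Fin 2) (ZMod p)) 1 1 = 1 := by
    intro A hA
    have h := det_entry A
    rw [hHU A hA] at h
    linear_combination h
  have hclosed : ∀ A B : Matrix.SpecialLinearGroup (Fin 2) (ZMod p), A ∈ H →
      (B : Matrix (Fin 2) (Fin 2) (ZMod p)) 1 0 = 0 →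
      (B : Matrix (Fin 2) (Fin 2) (ZMod p)) 0 0 *
        (A : Matrix (Fin 2) (Fin 2) (ZMod p)) 0 0 = 1 → B ∈ H := by
    intro A B hA hB10 hBA
    have hA10 := hHU A hA
    have h1 := hH1 A hA
    have h2 := det_entry B
    rw [hB10] at h2
    have hBAmem : B * A ∈ H := by
      apply hNH
      · rw [mul_entry, hA10]; linear_combination hBA
      · rw [mul_entry, hA10, hB10]; ring
      · rw [mul_entry, hB10]
        linear_combination h1 + ((A : Matrix (Fin 2) (Fin 2) (ZMod p)) 0 0 *
          (A : Matrix (Fin 2) (Fin 2) (ZMod p)) 1 1) * h2 -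
          ((A : Matrix (Fin 2) (Fin 2) (ZMod p)) 1 1 *
           (B : Matrix (Fin 2) (Fin 2) (ZMod p)) 1 1) * hBA
    have := H.mul_mem hBAmem (H.inv_mem hA)
    simpa [mul_assoc] using this
  have hKmem : ∀ A : Matrix.SpecialLinearGroup (Fin 2) (ZMod p), A ∈ K ↔ A ∈ H ∧
      (x : Matrix (Fin 2) (Fin 2) (ZMod p)) 1 0 * (A : Matrix (Fin 2) (Fin 2) (ZMod p)) 0 1 =
      (x : Matrix (Fin 2) (Fin 2) (ZMod p)) 1 1 *
        ((A : Matrix (Fin 2) (Fin 2) (ZMod p)) 0 0 -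
         (A : Matrix (Fin 2) (Fin 2) (ZMod p)) 1 1) := by
    intro A
    constructor
    · rintro ⟨hAH, hAm⟩
      refine ⟨hAH, ?_⟩
      have hA10 := hHU A hAH
      have h10 := hHU _ ((hmapmem A).mp hAm)
      rw [(conj_entries x A hA10).1] at h10
      have hfac : (x : Matrix (Fin 2) (Fin 2) (ZMod p)) 1 0 *
          ((x : Matrix (Fin 2) (Fin 2) (ZMod p)) 1 1 *
            ((A : Matrix (Fin 2) (Fin 2) (ZMod p)) 0 0 -
             (A : Matrix (Fin 2) (Fin 2) (ZMod p)) 1 1) -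
           (x : Matrix (Fin 2) (Fin 2) (ZMod p)) 1 0 *
            (A : Matrix (Fin 2) (Fin 2) (ZMod p)) 0 1) = 0 := by
        linear_combination h10
      rcases mul_eq_zero.mp hfac with h | h
      · exact absurd h hx
      · linear_combination -h
    · rintro ⟨hAH, hrel⟩
      have hA10 := hHU A hAH
      have h10 : ((x * A * x⁻¹ : Matrix.SpecialLinearGroup (Fin 2) (ZMod p)) :
          Matrix (Fin 2) (Fin 2) (ZMod p)) 1 0 = 0 := by
        rw [(conj_entries x A hA10).1]
        linear_combination (-((x : Matrix (Fin 2) (Fin 2) (ZMod p)) 1 0)) * hrel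
      have h00 : ((x * A * x⁻¹ : Matrix.SpecialLinearGroup (Fin 2) (ZMod p)) :
          Matrix (Fin 2) (Fin 2) (ZMod p)) 0 0 =
          (A : Matrix (Fin 2) (Fin 2) (ZMod p)) 1 1 := by
        rw [(conj_entries x A hA10).2]
        have hdx := det_entry x
        linear_combination (-((x : Matrix (Fin 2) (Fin 2) (ZMod p)) 0 0)) * hrel +
          (A : Matrix (Fin 2) (Fin 2) (ZMod p)) 1 1 * hdx
      refine ⟨hAH, (hmapmem A).mpr (hclosed A (x * A * x⁻¹) hAH h10 ?_)⟩
      rw [h00, mul_comm]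
      exact hH1 A hAH
  have hnmem : ∀ t : ZMod p, nelt p t ∈ H := fun t => hNH _ rfl rfl rfl
  have hKleH : K ≤ H := inf_le_left
  have hdecomp : ∀ h ∈ H, ∃ k, k ∈ K ∧ ∃ t : ZMod p, h = k * nelt p t := by
    intro h hh
    have hh10 := hHU h hh
    have hh1 := hH1 h hh
    obtain ⟨β, hβ⟩ : ∃ β : ZMod p, β = (x : Matrix (Fin 2) (Fin 2) (ZMod p)) 1 1 *
        ((x : Matrix (Fin 2) (Fin 2) (ZMod p)) 1 0)⁻¹ *
        ((h : Matrix (Fin 2) (Fin 2) (ZMod p)) 0 0 -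
         (h : Matrix (Fin 2) (Fin 2) (ZMod p)) 1 1) := ⟨_, rfl⟩
    have hdetk : Matrix.det !![(h : Matrix (Fin 2) (Fin 2) (ZMod p)) 0 0, β; 0,
        (h : Matrix (Fin 2) (Fin 2) (ZMod p)) 1 1] = 1 := by
      rw [Matrix.det_fin_two_of]; linear_combination hh1
    obtain ⟨k, hkmat⟩ : ∃ k : Matrix.SpecialLinearGroup (Fin 2) (ZMod p),
        (k : Matrix (Fin 2) (Fin 2) (ZMod p)) =
          !![(h : Matrix (Fin 2) (Fin 2) (ZMod p)) 0 0, β; 0,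
             (h : Matrix (Fin 2) (Fin 2) (ZMod p)) 1 1] := ⟨⟨_, hdetk⟩, rfl⟩
    have hk00 : (k : Matrix (Fin 2) (Fin 2) (ZMod p)) 0 0 =
        (h : Matrix (Fin 2) (Fin 2) (ZMod p)) 0 0 := by rw [hkmat]; simp
    have hk01 : (k : Matrix (Fin 2) (Fin 2) (ZMod p)) 0 1 = β := by rw [hkmat]; simp
    have hk10 : (k : Matrix (Fin 2) (Fin 2) (ZMod p)) 1 0 = 0 := by rw [hkmat]; simp
    have hk11 : (k : Matrix (Fin 2) (Fin 2) (ZMod p)) 1 1 =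
        (h : Matrix (Fin 2) (Fin 2) (ZMod p)) 1 1 := by rw [hkmat]; simp
    have hkH : k ∈ H := by
      apply hclosed h⁻¹ k (H.inv_mem hh) hk10
      rw [hk00, inv_entry]
      simpa using hh1
    have hkK : k ∈ K := by
      refine (hKmem k).mpr ⟨hkH, ?_⟩
      rw [hk01, hk00, hk11, hβ]
      field_simp
    refine ⟨k, hkK, (h : Matrix (Fin 2) (Fin 2) (ZMod p)) 1 1 *
      ((h : Matrix (Fin 2) (Fin 2) (ZMod p)) 0 1 - β), ?_⟩
    ext i j
    fin_cases i <;> fin_cases j <;>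
      simp only [mul_entry, Fin.zero_eta, Fin.mk_one, Fin.isValue,
        nelt_00, nelt_01, nelt_10, nelt_11, hk00, hk01, hk10, hk11]
    · ring
    · linear_combination (β - (h : Matrix (Fin 2) (Fin 2) (ZMod p)) 0 1) * hh1
    · rw [hh10]; ring
    · ring
  have hcardH : Nat.card (ZMod p × K) = Nat.card H := by
    apply Nat.card_eq_of_bijective
      (fun y : ZMod p × K => (⟨(y.2 : Matrix.SpecialLinearGroup (Fin 2) (ZMod p)) * nelt p y.1,
        H.mul_mem (hKleH y.2.2) (hnmem y.1)⟩ : H))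
    constructor
    · rintro ⟨t, k, hk⟩ ⟨s, k', hk'⟩ heq
      have heq' : k * nelt p t = k' * nelt p s := by
        simpa [Subtype.ext_iff] using heq
      obtain ⟨hkH, hkrel⟩ := (hKmem k).mp hk
      obtain ⟨hk'H, hk'rel⟩ := (hKmem k').mp hk'
      have hk10 := hHU k hkH
      have hk'10 := hHU k' hk'H
      have e00 : (k : Matrix (Fin 2) (Fin 2) (ZMod p)) 0 0 =
          (k' : Matrix (Fin 2) (Fin 2) (ZMod p)) 0 0 := by
        have h := congrArg
          (fun A : Matrix.SpecialLinearGroup (Fin 2) (ZMod p) =>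
            (A : Matrix (Fin 2) (Fin 2) (ZMod p)) 0 0) heq'
        simpa [mul_entry] using h
      have hk00ne : (k : Matrix (Fin 2) (Fin 2) (ZMod p)) 0 0 ≠ 0 := by
        intro h0
        have h1 := hH1 k hkH
        rw [h0] at h1
        simp at h1
      have e11 : (k : Matrix (Fin 2) (Fin 2) (ZMod p)) 1 1 =
          (k' : Matrix (Fin 2) (Fin 2) (ZMod p)) 1 1 := by
        have h1 := hH1 k hkH
        have h2 := hH1 k' hk'H
        rw [← e00] at h2
        exact mul_left_cancel₀ hk00ne (h1.trans h2.symm)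
      have e01 : (k : Matrix (Fin 2) (Fin 2) (ZMod p)) 0 1 =
          (k' : Matrix (Fin 2) (Fin 2) (ZMod p)) 0 1 := by
        apply mul_left_cancel₀ hx
        rw [hkrel, hk'rel, e00, e11]
      have ekk : k = k' := by
        ext i j
        fin_cases i <;> fin_cases j
        · exact e00
        · exact e01
        · exact hk10.trans hk'10.symm
        · exact e11
      rw [ekk] at heq'
      have hnn := mul_left_cancel heq'
      have hts : t = s := by
        have h := congrArg
          (fun A : Matrix.SpecialLinearGroup (Fin 2) (ZMod p) =>
            (A : Matrix (Fin 2) (Fin 2) (ZMod p)) 0 1) hnn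
        simpa using h
      subst hts
      simp only [Prod.mk.injEq, Subtype.mk.injEq]
      exact ⟨trivial, ekk⟩
    · rintro ⟨h, hh⟩
      obtain ⟨k, hk, t, hdec⟩ := hdecomp h hh
      exact ⟨(t, ⟨k, hk⟩), Subtype.ext hdec.symm⟩
  have hKsubcard : Nat.card (K.subgroupOf H) = Nat.card K :=
    Nat.card_congr (Subgroup.subgroupOfEquivOfLe hKleH).toEquiv
  have hmulidx := Subgroup.card_mul_index (K.subgroupOf H)
  haveI : Nonempty K := ⟨1⟩
  have hKpos : 0 < Nat.card K := Nat.card_pos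
  have hidx : (K.subgroupOf H).index = p := by
    have hHcard : Nat.card H = p * Nat.card K := by
      rw [← hcardH, Nat.card_prod, Nat.card_zmod]
    rw [hKsubcard, hHcard] at hmulidx
    exact Nat.eq_of_mul_eq_mul_left hKpos (hmulidx.trans (mul_comm p _))
  refine ⟨hidx, ?_⟩
  have hginj : Function.Injective (gmap p H x) := by
    rintro ⟨⟨h, hh⟩, t⟩ ⟨⟨h', hh'⟩, s⟩ heq
    simp only [gmap] at heq
    have key : (h'⁻¹ * h) * x * nelt p t = x * nelt p s := by
      calc (h'⁻¹ * h) * x * nelt p t = h'⁻¹ * (h * x * nelt p t) := by group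
        _ = h'⁻¹ * (h' * x * nelt p s) := by rw [heq]
        _ = x * nelt p s := by group
    have hq : h'⁻¹ * h = x * nelt p (s - t) * x⁻¹ := by
      have h1 : nelt p (s - t) = nelt p s * (nelt p t)⁻¹ := by
        rw [nelt_inv, nelt_mul, sub_eq_add_neg]
      rw [h1, ← mul_assoc, ← key]
      group
    have hmem : h'⁻¹ * h ∈ H := H.mul_mem (H.inv_mem hh') hh
    have h10 := hHU _ hmem
    rw [hq] at h10
    rw [(conj_entries x (nelt p (s - t)) (nelt_10 _)).1] at h10
    simp only [nelt_00, nelt_01, nelt_11] at h10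
    have hst : s - t = 0 := by
      have h2 : (x : Matrix (Fin 2) (Fin 2) (ZMod p)) 1 0 *
          ((x : Matrix (Fin 2) (Fin 2) (ZMod p)) 1 0 * (s - t)) = 0 := by
        linear_combination -h10
      rcases mul_eq_zero.mp h2 with h | h
      · exact absurd h hx
      rcases mul_eq_zero.mp h with h' | h'
      · exact absurd h' hx
      · exact h'
    have hts : t = s := by linear_combination -hst
    subst hts
    have hhh : h = h' := mul_right_cancel (mul_right_cancel heq)
    simp only [Prod.mk.injEq, Subtype.mk.injEq]
    exact ⟨hhh, trivial⟩
  have hset : (H : Set (Matrix.SpecialLinearGroup (Fin 2) (ZMod p))) * {x} *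
      (H : Set (Matrix.SpecialLinearGroup (Fin 2) (ZMod p))) = Set.range (gmap p H x) := by
    ext s0
    constructor
    · rintro ⟨u, hu, h2, hh2, rfl⟩
      obtain ⟨h1, hh1, x', hx', rfl⟩ := hu
      rw [Set.mem_singleton_iff] at hx'
      obtain ⟨k, hk, t, rfl⟩ := hdecomp h2 hh2
      have hxkx : x * k * x⁻¹ ∈ H := (hmapmem k).mp hk.2
      refine ⟨(⟨h1 * (x * k * x⁻¹), H.mul_mem hh1 hxkx⟩, t), ?_⟩
      show (h1 * (x * k * x⁻¹)) * x * nelt p t = h1 * x' * (k * nelt p t)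
      rw [hx']
      group
    · rintro ⟨⟨⟨h1, hh1⟩, t⟩, rfl⟩
      exact Set.mul_mem_mul (Set.mul_mem_mul hh1 rfl) (hnmem t)
  rw [hset, ← Nat.card_coe_set_eq, Nat.card_range_of_injective hginj, Nat.card_prod,
    Nat.card_zmod]
  exact mul_comm _ _
end

section
/- Let K be a finite group, H a non-normal subgroup, x ∈ K of order > 2 with ⟨H, x⟩ = K, L = H ∩ x⁻¹Hx, and c = [H : L]. If x² ∈ H and S = H ∪ xL, then |S| = (1 + 1/c)|H| and (c+1)|H| ≤ |S³| ≤ (c + 2 - 1/c)|H|. -/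
open Pointwise

lemma aux_doset_card {K : Type*} [Group K] [Finite K] (H L : Subgroup K) (x : K)
    (memL : ∀ g : K, g ∈ L ↔ g ∈ H ∧ x * g * x⁻¹ ∈ H) :
    ((H : Set K) * {x} * (H : Set K)).ncard = Nat.card H * (L.subgroupOf H).index := by
  have memD : ∀ d : K, d ∈ (H : Set K) * {x} * (H : Set K) ↔
      ∃ a ∈ H, ∃ b ∈ H, a * x * b = d := by
    intro d
    constructor
    · rintro ⟨y, ⟨a, ha, x', hx', rfl⟩, b, hb, rfl⟩
      rw [Set.mem_singleton_iff] at hx'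
      exact ⟨a, ha, b, hb, by rw [hx']⟩
    · rintro ⟨a, ha, b, hb, rfl⟩
      exact ⟨a * x, ⟨a, ha, x, rfl, rfl⟩, b, hb, rfl⟩
  set Q := H ⧸ L.subgroupOf H with hQ
  set φ : ↥H × Q → K := fun p => (p.1 : K) * x * ((p.2.out : H) : K)⁻¹ with hφ
  have hinj : Function.Injective φ := by
    rintro ⟨h, q⟩ ⟨h', q'⟩ heq
    simp only [hφ] at heq
    have hw : x * ((q.out : K)⁻¹ * (q'.out : K)) * x⁻¹ ∈ H := by
      have e : x * ((q.out : K)⁻¹ * (q'.out : K)) * x⁻¹ =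
          (h : K)⁻¹ * ((h : K) * x * (q.out : K)⁻¹) * ((q'.out : K) * x⁻¹) := by group
      have e2 : (h : K)⁻¹ * ((h' : K) * x * (q'.out : K)⁻¹) * ((q'.out : K) * x⁻¹) =
          (h : K)⁻¹ * (h' : K) := by group
      rw [e, heq, e2]
      exact H.mul_mem (H.inv_mem h.2) h'.2
    have hqq : q = q' := by
      rw [← Quotient.out_eq q, ← Quotient.out_eq q']
      have : (QuotientGroup.mk q.out : Q) = QuotientGroup.mk q'.out := by
        rw [QuotientGroup.eq, Subgroup.mem_subgroupOf]
        exact (memL _).mpr ⟨mul_mem (inv_mem q.out.2) q'.out.2, hw⟩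
      exact this
    subst hqq
    have : (h : K) = (h' : K) := by
      have := mul_right_cancel heq
      exact mul_right_cancel this
    exact Prod.ext (Subtype.ext this) rfl
  have hrange : Set.range φ = (H : Set K) * {x} * (H : Set K) := by
    ext d
    rw [memD]
    constructor
    · rintro ⟨⟨h, q⟩, rfl⟩
      exact ⟨h, h.2, (q.out : K)⁻¹, H.inv_mem q.out.2, rfl⟩
    · rintro ⟨a, ha, b, hb, rfl⟩
      set u : ↥H := ⟨b, hb⟩ with hu
      set q : Q := QuotientGroup.mk u⁻¹ with hq
      have ht : (QuotientGroup.mk q.out : Q) = QuotientGroup.mk u⁻¹ :=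
        (QuotientGroup.out_eq' q).trans hq
      rw [QuotientGroup.eq, Subgroup.mem_subgroupOf] at ht
      have hut : (u : K) * (q.out : K) ∈ L := by
        have := L.inv_mem ht
        simpa using this
      refine ⟨⟨⟨a * (x * ((u : K) * (q.out : K)) * x⁻¹),
        H.mul_mem ha ((memL _).mp hut).2⟩, q⟩, ?_⟩
      simp only [hφ]
      group
      rfl
  rw [← hrange, ← Nat.card_coe_set_eq, Nat.card_range_of_injective hinj, Nat.card_prod,
    ← Subgroup.index_eq_card]

theorem stmt19 {K : Type*} [Group K] [Finite K] (H : Subgroup K) (hH : ¬ H.Normal)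
    (x : K) (horder : 2 < orderOf x) (hgen : H ⊔ Subgroup.zpowers x = ⊤) (hx2 : x ^ 2 ∈ H)
    (L : Subgroup K) (hL : L = H ⊓ Subgroup.map (MulAut.conj x⁻¹).toMonoidHom H)
    (c : ℕ) (hc : c = (L.subgroupOf H).index)
    (S : Set K) (hS : S = (H : Set K) ∪ {x} * (L : Set K)) :
    c * S.ncard = (c + 1) * Nat.card H ∧
    (c + 1) * Nat.card H ≤ (S * S * S).ncard ∧
    c * (S * S * S).ncard ≤ (c * c + 2 * c - 1) * Nat.card H := by
  -- basic facts
  have hxH : x ∉ H := by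
    intro hx
    apply hH
    have : H = ⊤ := by
      rw [← hgen]
      symm
      rw [sup_eq_left]
      rintro g ⟨n, rfl⟩
      exact H.zpow_mem hx n
    rw [this]
    exact inferInstance
  have memL : ∀ g : K, g ∈ L ↔ g ∈ H ∧ x * g * x⁻¹ ∈ H := by
    intro g
    rw [hL, Subgroup.mem_inf]
    refine and_congr_right fun _ => ?_
    rw [Subgroup.mem_map]
    constructor
    · rintro ⟨h, hh, rfl⟩
      simpa [MulAut.conj, mul_assoc] using hh
    · intro hg
      exact ⟨x * g * x⁻¹, hg, by simp [MulAut.conj]; group⟩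
  have hLH : L ≤ H := fun g hg => ((memL g).1 hg).1
  set n := Nat.card H with hn
  set m := Nat.card L with hm
  -- m * c = n
  have hmc : m * c = n := by
    have e1 : Nat.card (L.subgroupOf H) = m :=
      Nat.card_congr (Subgroup.subgroupOfEquivOfLe hLH).toEquiv
    have e2 := Subgroup.card_mul_index (L.subgroupOf H)
    rw [e1, ← hc] at e2
    exact e2
  have hn0 : 0 < n := Nat.card_pos
  have hm0 : 0 < m := Nat.card_pos
  have hc1 : 1 ≤ c := by
    rcases Nat.eq_zero_or_pos c with h | h
    · rw [h, mul_zero] at hmc; omega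
    · exact h
  have hmn : m ≤ n := by
    calc m = m * 1 := (mul_one m).symm
    _ ≤ m * c := Nat.mul_le_mul_left m hc1
    _ = n := hmc
  -- cardinalities of basic sets
  have hcardA : (H : Set K).ncard = n := by
    rw [← Nat.card_coe_set_eq, SetLike.coe_sort_coe]
  have hcardL : (L : Set K).ncard = m := by
    rw [← Nat.card_coe_set_eq, SetLike.coe_sort_coe]
  have hBim : {x} * (L : Set K) = (fun g => x * g) '' (L : Set K) := by
    ext g
    simp [Set.mem_mul]
  have hcardB : ({x} * (L : Set K)).ncard = m := by
    rw [hBim, Set.ncard_image_of_injective _ (mul_right_injective x), hcardL]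
  have hdisjAB : Disjoint (H : Set K) ({x} * (L : Set K)) := by
    rw [Set.disjoint_left]
    intro a haH haB
    rw [hBim] at haB
    obtain ⟨l, hl, rfl⟩ := haB
    exact hxH (by simpa using H.mul_mem haH (H.inv_mem (hLH hl)))
  -- Part 1
  have part1 : c * S.ncard = (c + 1) * n := by
    rw [hS, Set.ncard_union_eq hdisjAB, hcardA, hcardB, mul_add, mul_comm c m, hmc]
    ring
  -- The double coset D
  set D := (H : Set K) * {x} * (H : Set K) with hD
  have memD : ∀ d : K, d ∈ D ↔ ∃ a ∈ H, ∃ b ∈ H, a * x * b = d := by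
    intro d
    constructor
    · rintro ⟨y, ⟨a, ha, x', hx', rfl⟩, b, hb, rfl⟩
      rw [Set.mem_singleton_iff] at hx'
      exact ⟨a, ha, b, hb, by rw [hx']⟩
    · rintro ⟨a, ha, b, hb, rfl⟩
      exact ⟨a * x, ⟨a, ha, x, rfl, rfl⟩, b, hb, rfl⟩
  have hcardD : D.ncard = n * c := by
    rw [hD, aux_doset_card H L x memL, ← hc]
  have hdisjAD : Disjoint (H : Set K) D := by
    rw [Set.disjoint_left]
    intro g hgH hgD
    obtain ⟨a, ha, b, hb, rfl⟩ := (memD _).1 hgD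
    exact hxH (by simpa [mul_assoc] using H.mul_mem (H.mul_mem (H.inv_mem ha) hgH) (H.inv_mem hb))
  -- membership helpers for S
  have hxS : x ∈ {x} * (L : Set K) := ⟨x, rfl, 1, L.one_mem, mul_one x⟩
  -- lower bound
  have hsub_lower : (H : Set K) ∪ D ⊆ S * S * S := by
    rintro g (hg | hg)
    · rw [hS]
      exact ⟨g * 1, ⟨g, Or.inl hg, 1, Or.inl H.one_mem, rfl⟩, 1, Or.inl H.one_mem, by group⟩
    · obtain ⟨a, ha, b, hb, rfl⟩ := (memD _).1 hg
      rw [hS]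
      exact ⟨a * x, ⟨a, Or.inl ha, x, Or.inr hxS, rfl⟩, b, Or.inl hb, rfl⟩
  have part2 : (c + 1) * n ≤ (S * S * S).ncard := by
    have h1 : ((H : Set K) ∪ D).ncard ≤ (S * S * S).ncard :=
      Set.ncard_le_ncard hsub_lower (Set.toFinite _)
    rw [Set.ncard_union_eq hdisjAD, hcardA, hcardD] at h1
    calc (c + 1) * n = n + n * c := by ring
    _ ≤ _ := h1
  -- The conjugate subgroup P
  set P := (fun g => x⁻¹ * g * x) '' (H : Set K) with hP
  have hPinj : Function.Injective (fun g : K => x⁻¹ * g * x) := by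
    intro a b h
    simp only at h
    have := mul_right_cancel h
    exact mul_left_cancel this
  have hcardP : P.ncard = n := by
    rw [hP, Set.ncard_image_of_injective _ hPinj, hcardA]
  have memP : ∀ g : K, g ∈ P ↔ x * g * x⁻¹ ∈ H := by
    intro g
    constructor
    · rintro ⟨h, hh, rfl⟩
      simpa [mul_assoc] using hh
    · intro hg
      exact ⟨x * g * x⁻¹, hg, by group⟩
  have hPA : P ∩ (H : Set K) = (L : Set K) := by
    ext g
    rw [Set.mem_inter_iff, memP, SetLike.mem_coe, SetLike.mem_coe, memL]
    exact and_comm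
  -- helpers for upper inclusion
  have hconj : ∀ l ∈ L, x * l * x⁻¹ ∈ H := fun l hl => ((memL l).1 hl).2
  have hBB : ∀ l ∈ L, ∀ l' ∈ L, (x * l) * (x * l') ∈ H := by
    intro l hl l' hl'
    have e : (x * l) * (x * l') = (x * l * x⁻¹) * x ^ 2 * l' := by group
    rw [e]
    exact H.mul_mem (H.mul_mem (hconj l hl) hx2) (hLH hl')
  have hBmem : ∀ g ∈ {x} * (L : Set K), ∃ l ∈ L, x * l = g := by
    intro g hg
    rw [hBim] at hg
    obtain ⟨l, hl, rfl⟩ := hg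
    exact ⟨l, hl, rfl⟩
  -- upper inclusion
  have hup : S * S * S ⊆ ((H : Set K) ∪ D) ∪ P := by
    rintro g ⟨y, ⟨s1, hs1, s2, hs2, rfl⟩, s3, hs3, rfl⟩
    rw [hS] at hs1 hs2 hs3
    rcases hs1 with h1 | hb1 <;> rcases hs2 with h2 | hb2 <;> rcases hs3 with h3 | hb3
    · exact Or.inl (Or.inl (H.mul_mem (H.mul_mem h1 h2) h3))
    · obtain ⟨l, hl, rfl⟩ := hBmem _ hb3
      refine Or.inl (Or.inr ((memD _).2 ⟨s1 * s2, H.mul_mem h1 h2, l, hLH hl, by group⟩))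
    · obtain ⟨l, hl, rfl⟩ := hBmem _ hb2
      refine Or.inl (Or.inr ((memD _).2 ⟨s1, h1, l * s3, H.mul_mem (hLH hl) h3, by group⟩))
    · obtain ⟨l, hl, rfl⟩ := hBmem _ hb2
      obtain ⟨l', hl', rfl⟩ := hBmem _ hb3
      refine Or.inl (Or.inl ?_)
      show s1 * (x * l) * (x * l') ∈ H
      have e : s1 * (x * l) * (x * l') = s1 * ((x * l) * (x * l')) := by group
      rw [e]
      exact H.mul_mem h1 (hBB l hl l' hl')
    · obtain ⟨l, hl, rfl⟩ := hBmem _ hb1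
      refine Or.inl (Or.inr ((memD _).2 ⟨1, H.one_mem, l * s2 * s3,
        H.mul_mem (H.mul_mem (hLH hl) h2) h3, by group⟩))
    · obtain ⟨l, hl, rfl⟩ := hBmem _ hb1
      obtain ⟨l', hl', rfl⟩ := hBmem _ hb3
      refine Or.inr ((memP _).2 ?_)
      have hxx : x * x ∈ H := by rwa [pow_two] at hx2
      have e : x * ((x * l) * s2 * (x * l')) * x⁻¹ = (x * x) * (l * s2) * (x * l' * x⁻¹) := by
        group
      rw [e]
      exact H.mul_mem (H.mul_mem hxx (H.mul_mem (hLH hl) h2)) (hconj l' hl')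
    · obtain ⟨l, hl, rfl⟩ := hBmem _ hb1
      obtain ⟨l', hl', rfl⟩ := hBmem _ hb2
      exact Or.inl (Or.inl (H.mul_mem (hBB l hl l' hl') h3))
    · obtain ⟨l, hl, rfl⟩ := hBmem _ hb1
      obtain ⟨l', hl', rfl⟩ := hBmem _ hb2
      obtain ⟨l'', hl'', rfl⟩ := hBmem _ hb3
      exact Or.inl (Or.inr ((memD _).2 ⟨(x * l) * (x * l'), hBB l hl l' hl', l'', hLH hl'',
        mul_assoc _ _ _⟩))
  -- refine to remove overlap
  have hss : ((H : Set K) ∪ D) ∪ P ⊆ ((H : Set K) ∪ D) ∪ (P \ (H : Set K)) := by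
    rintro g (hg | hg)
    · exact Or.inl hg
    · by_cases hA : g ∈ (H : Set K)
      · exact Or.inl (Or.inl hA)
      · exact Or.inr ⟨hg, hA⟩
  have hLP : (L : Set K) ⊆ P := by
    intro g hg
    rw [← hPA] at hg
    exact hg.1
  have hPdiffeq : P \ (H : Set K) = P \ (L : Set K) := by
    ext g
    constructor
    · rintro ⟨hp, hna⟩
      exact ⟨hp, fun hlmem => hna (hLH hlmem)⟩
    · rintro ⟨hp, hnl⟩
      refine ⟨hp, fun ha => hnl ?_⟩
      rw [← hPA]
      exact ⟨hp, ha⟩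
  have hPdiff : (P \ (H : Set K)).ncard = n - m := by
    rw [hPdiffeq, Set.ncard_diff hLP, hcardP, hcardL]
  -- upper bound count
  have key : (S * S * S).ncard ≤ n + n * c + (n - m) := by
    calc (S * S * S).ncard ≤ (((H : Set K) ∪ D) ∪ (P \ (H : Set K))).ncard :=
          Set.ncard_le_ncard (fun g hg => hss (hup hg)) (Set.toFinite _)
    _ ≤ ((H : Set K) ∪ D).ncard + (P \ (H : Set K)).ncard := Set.ncard_union_le _ _
    _ ≤ ((H : Set K).ncard + D.ncard) + (P \ (H : Set K)).ncard := by
          exact Nat.add_le_add_right (Set.ncard_union_le _ _) _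
    _ = n + n * c + (n - m) := by rw [hcardA, hcardD, hPdiff]
  refine ⟨part1, part2, ?_⟩
  -- final arithmetic
  have hsub : c * (n - m) + n = c * n := by
    have h1 : (n - m) + m = n := Nat.sub_add_cancel hmn
    calc c * (n - m) + n = c * (n - m) + c * m := by rw [mul_comm c m, hmc]
    _ = c * ((n - m) + m) := by ring
    _ = c * n := by rw [h1]
  have h1 : c * (S * S * S).ncard ≤ c * n + c * (n * c) + c * (n - m) := by
    calc c * (S * S * S).ncard ≤ c * (n + n * c + (n - m)) := Nat.mul_le_mul_left c key
    _ = c * n + c * (n * c) + c * (n - m) := by ring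
  have h2 : c * (S * S * S).ncard + n ≤ (c * c + 2 * c) * n := by
    have h3 : c * n + c * (n * c) + c * n = (c * c + 2 * c) * n := by ring
    linarith [h1, hsub, h3]
  have h4 : (c * c + 2 * c - 1) * n = (c * c + 2 * c) * n - 1 * n := Nat.sub_mul _ _ _
  rw [h4, one_mul]
  exact Nat.le_sub_of_add_le h2
end
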